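/- Let T be a locally compact, separable and metrisable topological space, let d ∈ M^T, let ε > 0, let K ⊆ T be a compact subset, let {K_1, …, K_m} be a partition of K into nonempty clopen subsets with D(K_i) < ε/2 for all i (diameter with respect to d), and let d_K be a metric on K compatible with its topology such that sup_{(x,y)∈K²} |d_K(x,y) − d(x,y)| < ε and d_K(x,y) = D(K_i, K_j) whenever x ∈ K_i, y ∈ K_j, i ≠ j (where D(K_i,K_j) = sup{d(u,v) : u ∈ K_i, v ∈ K_j}). Set C = K ∪ {x ∈ T : d(x,K) ≥ ε}, and define d_C : C² → [0,∞) by: d_C(x,y) = d_K(x,y) if x,y ∈ K; d_C(x,y) = D(x, K_i) + ε/2 if x ∈ C\K and y ∈ K_i (where D(x,K_i) = sup{d(x,u) : u ∈ K_i}); d_C(x,y) = D(y, K_i) + ε/2 if x ∈ K_i and y ∈ C\K; and d_C(x,y) = d(x,y) if x,y ∈ C\K. Then d_C is a proper metric on C compatible with the subspace topology of C, i.e. d_C ∈ M^C. -/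
import Mathlib


/-- `d` is a metric (as a raw function). -/
def IsMetric {T : Type*} (d : T → T → ℝ) : Prop :=
  (∀ x y, d x y = 0 ↔ x = y) ∧ (∀ x y, d x y = d y x) ∧ ∀ x y z, d x z ≤ d x y + d y z

/-- `d` induces the topology of `T`. -/
def Compatible (T : Type*) [TopologicalSpace T] (d : T → T → ℝ) : Prop :=
  ∀ s : Set T, IsOpen s ↔ ∀ x ∈ s, ∃ ε > 0, ∀ y, d x y < ε → y ∈ s

/-- `d` is a proper metric on `T` compatible with its topology, i.e. `d ∈ M^T`. -/
def ProperCompatMetric (T : Type*) [TopologicalSpace T] (d : T → T → ℝ) : Prop :=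
  IsMetric d ∧ Compatible T d ∧ ∀ (x : T) (r : ℝ), IsCompact {y : T | d x y ≤ r}

/-- The uniform (truncated) distance `ρ_T` on functions on `T²`. -/
noncomputable def rhoT (T : Type*) (f g : T → T → ℝ) : ℝ :=
  ⨆ p : T × T, min 1 |f p.1 p.2 - g p.1 p.2|

/-- `f` is `K`-Lipschitz with respect to the raw metric `d`. -/
def LipWith {M : Type*} (d : M → M → ℝ) (K : ℝ) (f : M → ℝ) : Prop :=
  ∀ x y, |f x - f y| ≤ K * d x y

/-- `D(A,B) = sup {d x y : x ∈ A, y ∈ B}`. -/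
noncomputable def supD {T : Type*} (d : T → T → ℝ) (A B : Set T) : ℝ :=
  sSup {r : ℝ | ∃ x ∈ A, ∃ y ∈ B, r = d x y}

/-- `d(x,A) = inf {d x y : y ∈ A}`. -/
noncomputable def infD {T : Type*} (d : T → T → ℝ) (x : T) (A : Set T) : ℝ :=
  sInf {r : ℝ | ∃ y ∈ A, r = d x y}

/-- **Statement 10.** The metric `d_C` built from `d_K` on `K` and `d` outside `K` is a
proper metric on `C = K ∪ {x : d(x,K) ≥ ε}` compatible with its subspace topology. -/
theorem stmt10
    {T : Type*} [TopologicalSpace T] [LocallyCompactSpace T]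
    [TopologicalSpace.SeparableSpace T] [TopologicalSpace.MetrizableSpace T]
    (d : T → T → ℝ) (hd : ProperCompatMetric T d) (ε : ℝ) (hε : 0 < ε)
    (K : Set T) (hKcpt : IsCompact K)
    (m : ℕ) (hm : 0 < m) (Ki : Fin m → Set T)
    (hsub : ∀ i, Ki i ⊆ K) (hne : ∀ i, (Ki i).Nonempty)
    (hdisj : ∀ i j, i ≠ j → Disjoint (Ki i) (Ki j)) (hcover : (⋃ i, Ki i) = K)
    (hclopen : ∀ i, IsClopen {x : ↥K | (x : T) ∈ Ki i})
    (hdiam : ∀ i, supD d (Ki i) (Ki i) < ε / 2)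
    (dK : ↥K → ↥K → ℝ) (hdK : IsMetric dK) (hdKc : Compatible ↥K dK)
    (hclose : sSup {r : ℝ | ∃ x y : ↥K, r = |dK x y - d (x : T) (y : T)|} < ε)
    (heq : ∀ i j, i ≠ j → ∀ x y : ↥K, (x : T) ∈ Ki i → (y : T) ∈ Ki j →
      dK x y = supD d (Ki i) (Ki j))
    (C : Set T) (hC : C = K ∪ {x : T | ε ≤ infD d x K})
    (dC : ↥C → ↥C → ℝ)
    (hdC1 : ∀ (x y : ↥C) (hx : (x : T) ∈ K) (hy : (y : T) ∈ K),
      dC x y = dK ⟨(x : T), hx⟩ ⟨(y : T), hy⟩)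
    (hdC2 : ∀ x y : ↥C, (x : T) ∉ K → ∀ i, (y : T) ∈ Ki i →
      dC x y = supD d {(x : T)} (Ki i) + ε / 2)
    (hdC3 : ∀ x y : ↥C, (y : T) ∉ K → ∀ i, (x : T) ∈ Ki i →
      dC x y = supD d {(y : T)} (Ki i) + ε / 2)
    (hdC4 : ∀ x y : ↥C, (x : T) ∉ K → (y : T) ∉ K → dC x y = d (x : T) (y : T))
    : ProperCompatMetric ↥C dC := by
  obtain ⟨⟨hd0, hdsymm, hdtri⟩, hdcomp, hdprop⟩ := hd
  obtain ⟨hK0, hKsymm, hKtri⟩ := hdK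
  -- nonnegativity
  have hdnn : ∀ x y : T, 0 ≤ d x y := by
    intro x y
    have h1 := hdtri x y x
    have h2 := (hd0 x x).mpr rfl
    have h3 := hdsymm x y
    linarith
  have hKnn : ∀ x y : ↥K, 0 ≤ dK x y := by
    intro x y
    have h1 := hKtri x y x
    have h2 := (hK0 x x).mpr rfl
    have h3 := hKsymm x y
    linarith
  -- open balls of d are open
  have ballopen : ∀ (x : T) (r : ℝ), IsOpen {y : T | d x y < r} := by
    intro x r
    refine (hdcomp _).mpr ?_
    intro z hz
    refine ⟨r - d x z, by simpa using hz, fun y hy => ?_⟩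
    have := hdtri x z y
    simp only [Set.mem_setOf_eq] at *
    linarith
  have hKne : K.Nonempty := ⟨(hne ⟨0, hm⟩).choose, hsub _ (hne ⟨0, hm⟩).choose_spec⟩
  obtain ⟨x0, hx0⟩ := hKne
  -- bound for d on K
  have hN : ∃ N : ℝ, 0 ≤ N ∧ ∀ u ∈ K, d x0 u ≤ N := by
    have hcov : K ⊆ ⋃ n : ℕ, {y : T | d x0 y < n} := by
      intro y _
      obtain ⟨n, hn⟩ := exists_nat_gt (d x0 y)
      exact Set.mem_iUnion.mpr ⟨n, hn⟩
    obtain ⟨t, ht⟩ := hKcpt.elim_finite_subcover _ (fun n : ℕ => ballopen x0 n) hcov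
    refine ⟨(t.sup id : ℕ), Nat.cast_nonneg _, fun u hu => ?_⟩
    obtain ⟨n, hn, hlt⟩ := Set.mem_iUnion₂.mp (ht hu)
    have : (n : ℝ) ≤ ((t.sup id : ℕ) : ℝ) := by
      exact_mod_cast Finset.le_sup (f := id) hn
    simp only [Set.mem_setOf_eq] at hlt
    linarith
  obtain ⟨N, hN0, hNle⟩ := hN
  have hdbK : ∀ u ∈ K, ∀ v ∈ K, d u v ≤ 2 * N := by
    intro u hu v hv
    have h1 := hdtri u x0 v
    have h2 := hdsymm x0 u
    have := hNle u hu; have := hNle v hv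
    linarith
  -- bound for dK
  have : CompactSpace ↥K := isCompact_iff_compactSpace.mp hKcpt
  have hNK : ∃ NK : ℝ, 0 ≤ NK ∧ ∀ z w : ↥K, dK z w ≤ 2 * NK := by
    have ballK : ∀ (z : ↥K) (r : ℝ), IsOpen {w : ↥K | dK z w < r} := by
      intro z r
      refine (hdKc _).mpr ?_
      intro w hw
      refine ⟨r - dK z w, by simpa using hw, fun y hy => ?_⟩
      have := hKtri z w y
      simp only [Set.mem_setOf_eq] at *
      linarith
    set z0 : ↥K := ⟨x0, hx0⟩
    have hcov : Set.univ ⊆ ⋃ n : ℕ, {w : ↥K | dK z0 w < n} := by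
      intro w _
      obtain ⟨n, hn⟩ := exists_nat_gt (dK z0 w)
      exact Set.mem_iUnion.mpr ⟨n, hn⟩
    obtain ⟨t, ht⟩ := isCompact_univ.elim_finite_subcover _ (fun n : ℕ => ballK z0 n) hcov
    refine ⟨(t.sup id : ℕ), Nat.cast_nonneg _, fun z w => ?_⟩
    have hb : ∀ w : ↥K, dK z0 w ≤ ((t.sup id : ℕ) : ℝ) := by
      intro w
      obtain ⟨n, hn, hlt⟩ := Set.mem_iUnion₂.mp (ht (Set.mem_univ w))
      have : (n : ℝ) ≤ ((t.sup id : ℕ) : ℝ) := by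
        exact_mod_cast Finset.le_sup (f := id) hn
      simp only [Set.mem_setOf_eq] at hlt
      linarith
    have h1 := hKtri z z0 w
    have h2 := hKsymm z0 z
    have := hb z; have := hb w
    linarith
  obtain ⟨NK, hNK0, hNKle⟩ := hNK
  -- dK is uniformly close to d
  have hclose' : ∀ x y : ↥K, |dK x y - d (x : T) (y : T)| < ε := by
    intro x y
    have hb : BddAbove {r : ℝ | ∃ x y : ↥K, r = |dK x y - d (x : T) (y : T)|} := by
      refine ⟨2 * NK + 2 * N, ?_⟩
      rintro r ⟨a, b, rfl⟩
      have h1 := hNKle a b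
      have h2 := hdbK _ a.2 _ b.2
      have h3 := hKnn a b
      have h4 := hdnn (a : T) (b : T)
      rw [abs_le]
      constructor <;> linarith
    exact lt_of_le_of_lt (le_csSup hb ⟨x, y, rfl⟩) hclose
  -- supD helpers
  have hle_supD : ∀ (A B : Set T) (M : ℝ), (∀ a ∈ A, ∀ b ∈ B, d a b ≤ M) →
      ∀ a ∈ A, ∀ b ∈ B, d a b ≤ supD d A B := by
    intro A B M h a ha b hb
    refine le_csSup ⟨M, ?_⟩ ⟨a, ha, b, hb, rfl⟩
    rintro r ⟨a', ha', b', hb', rfl⟩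
    exact h a' ha' b' hb'
  have hdiam' : ∀ i, ∀ a ∈ Ki i, ∀ b ∈ Ki i, d a b ≤ ε / 2 := by
    intro i a ha b hb
    have h1 : d a b ≤ supD d (Ki i) (Ki i) :=
      hle_supD _ _ (2 * N) (fun a' ha' b' hb' => hdbK _ (hsub i ha') _ (hsub i hb')) a ha b hb
    linarith [hdiam i]
  have hle_Dx : ∀ (x : T) (i : Fin m), ∀ u ∈ Ki i, d x u ≤ supD d {x} (Ki i) := by
    intro x i u hu
    refine hle_supD {x} (Ki i) (d x x0 + N) ?_ x rfl u hu
    intro a ha b hb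
    rcases ha with rfl
    have := hdtri a x0 b
    have := hNle b (hsub i hb)
    linarith
  have hDx_nonneg : ∀ (x : T) (i : Fin m), 0 ≤ supD d {x} (Ki i) := by
    intro x i
    obtain ⟨u, hu⟩ := hne i
    exact le_trans (hdnn x u) (hle_Dx x i u hu)
  have hDx_le : ∀ (x : T) (i : Fin m), ∀ u ∈ Ki i, supD d {x} (Ki i) ≤ d x u + ε / 2 := by
    intro x i u hu
    refine Real.sSup_le ?_ (by linarith [hdnn x u])
    rintro r ⟨a, ha, b, hb, rfl⟩
    rcases ha with rfl
    have h1 := hdtri a u b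
    have h2 := hdiam' i u hu b hb
    linarith
  have hDij : ∀ i j, ∀ u ∈ Ki i, ∀ v ∈ Ki j, d u v ≤ supD d (Ki i) (Ki j) := by
    intro i j u hu v hv
    exact hle_supD _ _ (2 * N) (fun a ha b hb => hdbK _ (hsub i ha) _ (hsub j hb)) u hu v hv
  have hDij_nonneg : ∀ i j, 0 ≤ supD d (Ki i) (Ki j) := by
    intro i j
    obtain ⟨u, hu⟩ := hne i
    obtain ⟨v, hv⟩ := hne j
    exact le_trans (hdnn u v) (hDij i j u hu v hv)
  have hDx_tri : ∀ (a b : T) (i : Fin m),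
      supD d {a} (Ki i) ≤ d a b + supD d {b} (Ki i) := by
    intro a b i
    refine Real.sSup_le ?_ (by linarith [hdnn a b, hDx_nonneg b i])
    rintro r ⟨s, hs, u, hu, rfl⟩
    rcases hs with rfl
    have h1 := hdtri s b u
    have h2 := hle_Dx b i u hu
    linarith
  have hjump : ∀ (a : T) (i j : Fin m),
      supD d {a} (Ki j) ≤ supD d {a} (Ki i) + supD d (Ki i) (Ki j) := by
    intro a i j
    refine Real.sSup_le ?_ (by linarith [hDx_nonneg a i, hDij_nonneg i j])
    rintro r ⟨s, hs, v, hv, rfl⟩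
    rcases hs with rfl
    obtain ⟨u, hu⟩ := hne i
    have h1 := hdtri s u v
    have h2 := hle_Dx s i u hu
    have h3 := hDij i j u hu v hv
    linarith
  -- points of C outside K are far from K
  have hCfar : ∀ y : ↥C, (y : T) ∉ K → ∀ u ∈ K, ε ≤ d (y : T) u := by
    intro y hy u hu
    have hyC : (y : T) ∈ K ∪ {x : T | ε ≤ infD d x K} := by rw [← hC]; exact y.2
    rcases hyC with h | h
    · exact absurd h hy
    · have h2 : infD d (y : T) K ≤ d (y : T) u := by
        refine csInf_le ⟨0, ?_⟩ ⟨u, hu, rfl⟩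
        rintro r ⟨z, hz, rfl⟩
        exact hdnn _ _
      exact le_trans h h2
  have hfar_Dx : ∀ (y : ↥C) (i : Fin m), (y : T) ∉ K → ε ≤ supD d {(y : T)} (Ki i) := by
    intro y i hy
    obtain ⟨u, hu⟩ := hne i
    exact le_trans (hCfar y hy u (hsub i hu)) (hle_Dx _ i u hu)
  have hmemKi : ∀ z ∈ K, ∃ i, z ∈ Ki i := by
    intro z hz
    rw [← hcover] at hz
    exact Set.mem_iUnion.mp hz
  -- symmetry
  have hsym : ∀ x y : ↥C, dC x y = dC y x := by
    intro x y
    by_cases hx : (x : T) ∈ K <;> by_cases hy : (y : T) ∈ K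
    · rw [hdC1 x y hx hy, hdC1 y x hy hx, hKsymm]
    · obtain ⟨i, hi⟩ := hmemKi _ hx
      rw [hdC3 x y hy i hi, hdC2 y x hy i hi]
    · obtain ⟨i, hi⟩ := hmemKi _ hy
      rw [hdC2 x y hx i hi, hdC3 y x hx i hi]
    · rw [hdC4 x y hx hy, hdC4 y x hy hx, hdsymm]
  -- zero iff equal
  have hzero : ∀ x y : ↥C, dC x y = 0 ↔ x = y := by
    intro x y
    by_cases hx : (x : T) ∈ K <;> by_cases hy : (y : T) ∈ K
    · rw [hdC1 x y hx hy]
      constructor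
      · intro h
        have h2 := (hK0 _ _).mp h
        have h3 : ((⟨(x : T), hx⟩ : ↥K) : T) = ((⟨(y : T), hy⟩ : ↥K) : T) :=
          congrArg Subtype.val h2
        exact Subtype.ext h3
      · rintro rfl
        exact (hK0 _ _).mpr rfl
    · obtain ⟨i, hi⟩ := hmemKi _ hx
      rw [hdC3 x y hy i hi]
      constructor
      · intro h
        exfalso
        have := hfar_Dx y i hy
        linarith
      · rintro rfl
        exact absurd hx hy
    · obtain ⟨i, hi⟩ := hmemKi _ hy
      rw [hdC2 x y hx i hi]
      constructor
      · intro h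
        exfalso
        have := hfar_Dx x i hx
        linarith
      · rintro rfl
        exact absurd hy hx
    · rw [hdC4 x y hx hy]
      exact ⟨fun h => Subtype.ext ((hd0 _ _).mp h), fun h => (hd0 _ _).mpr (congrArg _ h)⟩
  -- triangle inequality
  have htri : ∀ x y z : ↥C, dC x z ≤ dC x y + dC y z := by
    intro x y z
    by_cases hx : (x : T) ∈ K <;> by_cases hy : (y : T) ∈ K <;> by_cases hz : (z : T) ∈ K
    · rw [hdC1 x z hx hz, hdC1 x y hx hy, hdC1 y z hy hz]
      exact hKtri _ _ _
    · -- x,y ∈ K, z ∉ K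
      obtain ⟨i, hi⟩ := hmemKi _ hx
      obtain ⟨j, hj⟩ := hmemKi _ hy
      rw [hdC3 x z hz i hi, hdC1 x y hx hy, hdC3 y z hz j hj]
      by_cases hij : i = j
      · subst hij
        have := hKnn ⟨(x : T), hx⟩ ⟨(y : T), hy⟩
        linarith
      · rw [heq i j hij ⟨(x : T), hx⟩ ⟨(y : T), hy⟩ hi hj]
        have key : supD d {(z : T)} (Ki i) ≤ supD d {(z : T)} (Ki j) + supD d (Ki i) (Ki j) := by
          refine Real.sSup_le ?_ (by linarith [hDx_nonneg (z : T) j, hDij_nonneg i j])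
          rintro r ⟨s, hs, u, hu, rfl⟩
          rcases hs with rfl
          have h1 := hdtri ((z : ↥C) : T) (y : T) u
          have h2 := hle_Dx ((z : ↥C) : T) j (y : T) hj
          have h3 := hDij i j u hu (y : T) hj
          have h4 := hdsymm (y : T) u
          linarith
        linarith
    · -- x,z ∈ K, y ∉ K
      obtain ⟨i, hi⟩ := hmemKi _ hx
      obtain ⟨j, hj⟩ := hmemKi _ hz
      rw [hdC1 x z hx hz, hdC3 x y hy i hi, hdC2 y z hy j hj]
      by_cases hij : i = j
      · subst hij
        have h1 := hclose' ⟨(x : T), hx⟩ ⟨(z : T), hz⟩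
        rw [abs_lt] at h1
        have h2 := hdiam' i _ hi _ hj
        have h3 := hfar_Dx y i hy
        linarith
      · rw [heq i j hij ⟨(x : T), hx⟩ ⟨(z : T), hz⟩ hi hj]
        have key : supD d (Ki i) (Ki j) ≤
            supD d {(y : T)} (Ki i) + supD d {(y : T)} (Ki j) := by
          refine Real.sSup_le ?_ (by linarith [hDx_nonneg (y : T) i, hDx_nonneg (y : T) j])
          rintro r ⟨a, ha, b, hb, rfl⟩
          have h1 := hdtri a (y : T) b
          have h2 := hdsymm (y : T) a
          have h3 := hle_Dx (y : T) i a ha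
          have h4 := hle_Dx (y : T) j b hb
          linarith
        linarith
    · -- x ∈ K, y,z ∉ K
      obtain ⟨i, hi⟩ := hmemKi _ hx
      rw [hdC3 x z hz i hi, hdC3 x y hy i hi, hdC4 y z hy hz]
      have h1 := hDx_tri (z : T) (y : T) i
      have h2 := hdsymm (y : T) (z : T)
      linarith
    · -- x ∉ K, y,z ∈ K
      obtain ⟨i, hi⟩ := hmemKi _ hy
      obtain ⟨j, hj⟩ := hmemKi _ hz
      rw [hdC2 x z hx j hj, hdC2 x y hx i hi, hdC1 y z hy hz]
      by_cases hij : i = j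
      · subst hij
        have := hKnn ⟨(y : T), hy⟩ ⟨(z : T), hz⟩
        linarith
      · rw [heq i j hij ⟨(y : T), hy⟩ ⟨(z : T), hz⟩ hi hj]
        have := hjump (x : T) i j
        linarith
    · -- x,z ∉ K, y ∈ K
      obtain ⟨i, hi⟩ := hmemKi _ hy
      rw [hdC4 x z hx hz, hdC2 x y hx i hi, hdC3 y z hz i hi]
      obtain ⟨u, hu⟩ := hne i
      have h1 := hdtri (x : T) u (z : T)
      have h2 := hle_Dx (x : T) i u hu
      have h3 := hle_Dx (z : T) i u hu
      have h4 := hdsymm u (z : T)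
      linarith
    · -- x,y ∉ K, z ∈ K
      obtain ⟨j, hj⟩ := hmemKi _ hz
      rw [hdC2 x z hx j hj, hdC4 x y hx hy, hdC2 y z hy j hj]
      have := hDx_tri (x : T) (y : T) j
      linarith
    · rw [hdC4 x z hx hz, hdC4 x y hx hy, hdC4 y z hy hz]
      exact hdtri _ _ _
  have hCnn : ∀ x y : ↥C, 0 ≤ dC x y := by
    intro x y
    have h1 := htri x y x
    have h2 := (hzero x x).mpr rfl
    have h3 := hsym x y
    linarith
  -- cross lower bound
  have hcross : ∀ x y : ↥C, (x : T) ∈ K → (y : T) ∉ K → ε ≤ dC x y := by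
    intro x y hx hy
    obtain ⟨i, hi⟩ := hmemKi _ hx
    rw [hdC3 x y hy i hi]
    have := hfar_Dx y i hy
    linarith
  -- compatibility
  have hcomp : Compatible ↥C dC := by
    intro s
    constructor
    · intro hs x hx
      obtain ⟨U, hU, hUs⟩ := isOpen_induced_iff.mp hs
      have hxU : (x : T) ∈ U := by rw [← hUs] at hx; exact hx
      by_cases hxK : (x : T) ∈ K
      · have hsK : IsOpen {z : ↥K | (z : T) ∈ U} := hU.preimage continuous_subtype_val
        obtain ⟨δ, hδ, hball⟩ := (hdKc _).mp hsK ⟨(x : T), hxK⟩ hxU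
        refine ⟨min δ ε, lt_min hδ hε, fun y hy => ?_⟩
        by_cases hyK : (y : T) ∈ K
        · have : dK ⟨(x : T), hxK⟩ ⟨(y : T), hyK⟩ < δ := by
            rw [← hdC1 x y hxK hyK]
            exact lt_of_lt_of_le hy (min_le_left _ _)
          have := hball ⟨(y : T), hyK⟩ this
          rw [← hUs]; exact this
        · exfalso
          have h1 := hcross x y hxK hyK
          have h2 := lt_of_lt_of_le hy (min_le_right _ _)
          linarith
      · obtain ⟨δ, hδ, hball⟩ := (hdcomp U).mp hU (x : T) hxU
        refine ⟨min δ ε, lt_min hδ hε, fun y hy => ?_⟩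
        by_cases hyK : (y : T) ∈ K
        · exfalso
          have h1 := hcross y x hyK hxK
          rw [← hsym] at h1
          have h2 := lt_of_lt_of_le hy (min_le_right _ _)
          linarith
        · have : d (x : T) (y : T) < δ := by
            rw [← hdC4 x y hxK hyK]
            exact lt_of_lt_of_le hy (min_le_left _ _)
          have := hball (y : T) this
          rw [← hUs]; exact this
    · intro hcond
      rw [isOpen_iff_mem_nhds]
      intro x hx
      obtain ⟨δ, hδ, hball⟩ := hcond x hx
      rw [mem_nhds_subtype]
      by_cases hxK : (x : T) ∈ K
      · -- dK-ball is open in K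
        have hBK : IsOpen {z : ↥K | dK ⟨(x : T), hxK⟩ z < δ} := by
          refine (hdKc _).mpr ?_
          intro w hw
          refine ⟨δ - dK ⟨(x : T), hxK⟩ w, by simpa using hw, fun y hy => ?_⟩
          have := hKtri ⟨(x : T), hxK⟩ w y
          simp only [Set.mem_setOf_eq] at *
          linarith
        obtain ⟨V, hV, hVB⟩ := isOpen_induced_iff.mp hBK
        refine ⟨V ∩ {y : T | d (x : T) y < ε}, ?_, ?_⟩
        · refine (hV.inter (ballopen _ _)).mem_nhds ⟨?_, ?_⟩
          · have : (⟨(x : T), hxK⟩ : ↥K) ∈ {z : ↥K | dK ⟨(x : T), hxK⟩ z < δ} := by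
              simp only [Set.mem_setOf_eq, (hK0 _ _).mpr rfl]; exact hδ
            rw [← hVB] at this
            exact this
          · simp only [Set.mem_setOf_eq, (hd0 _ _).mpr rfl]; exact hε
        · rintro y ⟨hyV, hyB⟩
          simp only [Set.mem_setOf_eq] at hyB
          by_cases hyK : (y : T) ∈ K
          · have : (⟨(y : T), hyK⟩ : ↥K) ∈ Subtype.val ⁻¹' V := hyV
            rw [hVB] at this
            have hlt : dC x y < δ := by
              rw [hdC1 x y hxK hyK]
              exact this
            exact hball y hlt
          · exfalso
            have := hCfar y hyK (x : T) hxK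
            have := hdsymm (y : T) (x : T)
            linarith
      · refine ⟨{y : T | d (x : T) y < min δ ε}, ?_, ?_⟩
        · refine (ballopen _ _).mem_nhds ?_
          simp only [Set.mem_setOf_eq, (hd0 _ _).mpr rfl]
          exact lt_min hδ hε
        · intro y hy
          simp only [Set.mem_preimage, Set.mem_setOf_eq] at hy
          by_cases hyK : (y : T) ∈ K
          · exfalso
            have := hCfar x hxK (y : T) hyK
            have h2 := lt_of_lt_of_le hy (min_le_right _ _)
            linarith
          · have hlt : dC x y < δ := by
              rw [hdC4 x y hxK hyK]
              exact lt_of_lt_of_le hy (min_le_left _ _)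
            exact hball y hlt
  refine ⟨⟨hzero, hsym, htri⟩, hcomp, ?_⟩
  -- properness
  -- C is closed in T
  have hinfLip : ∀ x y : T, infD d x K ≤ infD d y K + d x y := by
    intro x y
    have hb : BddBelow {r : ℝ | ∃ z ∈ K, r = d y z} := by
      refine ⟨0, ?_⟩
      rintro r ⟨z, hz, rfl⟩
      exact hdnn _ _
    have hne' : {r : ℝ | ∃ z ∈ K, r = d y z}.Nonempty := ⟨d y x0, x0, hx0, rfl⟩
    have key : infD d x K - d x y ≤ infD d y K := by
      refine le_csInf hne' ?_
      rintro r ⟨z, hz, rfl⟩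
      have h1 : infD d x K ≤ d x z := by
        refine csInf_le ⟨0, ?_⟩ ⟨z, hz, rfl⟩
        rintro r ⟨w, hw, rfl⟩
        exact hdnn _ _
      have h2 := hdtri x y z
      linarith
    linarith
  have hCclosed : IsClosed C := by
    rw [hC]
    refine IsClosed.union hKcpt.isClosed ?_
    rw [← isOpen_compl_iff]
    have : {x : T | ε ≤ infD d x K}ᶜ = {x : T | infD d x K < ε} := by
      ext x; simp [not_le]
    rw [this]
    refine (hdcomp _).mpr ?_
    intro x hx
    simp only [Set.mem_setOf_eq] at hx
    refine ⟨ε - infD d x K, by linarith, fun y hy => ?_⟩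
    have h1 := hinfLip y x
    have h2 := hdsymm y x
    simp only [Set.mem_setOf_eq]
    linarith
  intro x r
  -- closedness of the ball
  have hSclosed : IsClosed {y : ↥C | dC x y ≤ r} := by
    have hopen : IsOpen {y : ↥C | r < dC x y} := by
      refine (hcomp _).mpr ?_
      intro y hy
      simp only [Set.mem_setOf_eq] at hy
      refine ⟨dC x y - r, by linarith, fun z hz => ?_⟩
      have h1 := htri x z y
      have h2 := hsym z y
      simp only [Set.mem_setOf_eq]
      linarith
    have : {y : ↥C | dC x y ≤ r} = {y : ↥C | r < dC x y}ᶜ := by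
      ext y; simp [not_lt]
    rw [this]
    exact hopen.isClosed_compl
  -- compact superset
  set R : ℝ := N + r + d x0 (x : T) + 1 with hR
  have hsubset : {y : ↥C | dC x y ≤ r} ⊆ {y : ↥C | d x0 (y : T) ≤ R} := by
    intro y hy
    simp only [Set.mem_setOf_eq] at hy ⊢
    have hr0 : 0 ≤ r := le_trans (hCnn x y) hy
    have hdx0 : 0 ≤ d x0 (x : T) := hdnn _ _
    by_cases hyK : (y : T) ∈ K
    · have := hNle _ hyK
      linarith
    · by_cases hxK : (x : T) ∈ K
      · obtain ⟨i, hi⟩ := hmemKi _ hxK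
        rw [hdC3 x y hyK i hi] at hy
        obtain ⟨u, hu⟩ := hne i
        have h1 := hle_Dx (y : T) i u hu
        have h2 := hdtri x0 u (y : T)
        have h3 := hdsymm (y : T) u
        have h4 := hNle u (hsub i hu)
        linarith
      · rw [hdC4 x y hxK hyK] at hy
        have h1 := hdtri x0 (x : T) (y : T)
        linarith
  have hScpt : IsCompact {y : ↥C | d x0 (y : T) ≤ R} := by
    rw [Subtype.isCompact_iff]
    have himg : Subtype.val '' {y : ↥C | d x0 (y : T) ≤ R} = {y : T | d x0 y ≤ R} ∩ C := by
      ext z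
      constructor
      · rintro ⟨w, hw, rfl⟩
        exact ⟨hw, w.2⟩
      · rintro ⟨hz, hzC⟩
        exact ⟨⟨z, hzC⟩, hz, rfl⟩
    rw [himg]
    exact (hdprop x0 R).inter_right hCclosed
  exact IsCompact.of_isClosed_subset hScpt hSclosed hsubset
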